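/- The (2N+1)×(2N+1) matrix A with entries A_{j,k} = π²/3 for j = k and A_{j,k} = 2(-1)^{k-j}/(k-j)² for j ≠ k (indices -N ≤ j,k ≤ N) is symmetric positive definite. -/

import Mathlib

open Real MeasureTheory intervalIntegral
set_option maxHeartbeats 1000000

lemma neg_one_zpow_neg (n : ℤ) : (-1:ℝ)^(-n) = (-1:ℝ)^n := by
  have h1 : (-1:ℝ)^n * (-1:ℝ)^n = 1 := by
    rw [← zpow_add₀ (by norm_num : (-1:ℝ) ≠ 0)]
    rw [show n + n = 2 * n by ring, zpow_mul]
    norm_num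
  rw [zpow_neg, inv_eq_of_mul_eq_one_left h1]

lemma integral_cos_int (n : ℤ) :
    ∫ t in (-π)..π, Real.cos (n * t) = if n = 0 then 2 * π else 0 := by
  rcases eq_or_ne n 0 with h | h
  · subst h; simp [two_mul]
  · have hc : ((n:ℝ)) ≠ 0 := Int.cast_ne_zero.mpr h
    simp only [if_neg h]
    have := intervalIntegral.integral_comp_mul_left (fun t => Real.cos t) hc (a := -π) (b := π)
    rw [this]
    have hs : Real.sin ((n:ℝ) * π) = 0 := Real.sin_int_mul_pi n
    simp [integral_cos, show (n:ℝ) * -π = -((n:ℝ)*π) by ring, Real.sin_neg, hs]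

lemma integral_sq_cos_int (n : ℤ) :
    ∫ t in (-π)..π, t^2 * Real.cos (n * t) =
      if n = 0 then 2 * π^3 / 3 else 4 * π * (-1:ℝ)^n / (n:ℝ)^2 := by
  rcases eq_or_ne n 0 with h | h
  · subst h
    simp only [Int.cast_zero, zero_mul, Real.cos_zero, mul_one, if_pos]
    rw [integral_pow]
    ring
  · have hc : ((n:ℝ)) ≠ 0 := Int.cast_ne_zero.mpr h
    set c : ℝ := (n:ℝ)
    have hderiv : ∀ t : ℝ, HasDerivAt
        (fun t => t^2 * Real.sin (c*t) * c⁻¹ + 2*t*Real.cos (c*t) * (c^2)⁻¹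
          - 2*Real.sin (c*t) * (c^3)⁻¹) (t^2 * Real.cos (c * t)) t := by
      intro t
      have hct : HasDerivAt (fun t : ℝ => c * t) c t := by
        simpa using (hasDerivAt_id t).const_mul c
      have hsin : HasDerivAt (fun t => Real.sin (c*t)) (Real.cos (c*t) * c) t :=
        (Real.hasDerivAt_sin (c*t)).comp t hct
      have hcos : HasDerivAt (fun t => Real.cos (c*t)) (-Real.sin (c*t) * c) t :=
        (Real.hasDerivAt_cos (c*t)).comp t hct
      have hsq : HasDerivAt (fun t : ℝ => t^2) (2*t) t := by
        simpa using hasDerivAt_pow 2 t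
      have h1 := ((hsq.mul hsin).mul_const c⁻¹)
      have h2 := (((hasDerivAt_id t).const_mul 2).mul hcos).mul_const ((c^2)⁻¹)
      have h3 := (hsin.const_mul 2).mul_const ((c^3)⁻¹)
      have := (h1.add h2).sub h3
      refine this.congr_deriv ?_
      field_simp
      simp only [id]
      ring
    rw [intervalIntegral.integral_eq_sub_of_hasDerivAt (fun t _ => hderiv t)
      (by apply Continuous.intervalIntegrable; continuity)]
    have hs : Real.sin (c * π) = 0 := by simpa [c] using Real.sin_int_mul_pi n
    have hs' : Real.sin (c * -π) = 0 := by rw [show c * -π = -(c*π) by ring, Real.sin_neg, hs, neg_zero]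
    have hcc : Real.cos (c * π) = (-1:ℝ)^n := by
      simpa [c] using Real.cos_int_mul_pi_sub 0 n
    have hcc' : Real.cos (c * -π) = (-1:ℝ)^n := by
      rw [show c * -π = -(c*π) by ring, Real.cos_neg, hcc]
    rw [if_neg h]
    rw [hs, hs', hcc, hcc']
    field_simp
    ring

theorem negative_sinc_second_derivative_matrix_posDef (N : ℕ) :
    (Matrix.of (fun j k : ↥(Finset.Icc (-(N : ℤ)) (N : ℤ)) =>
      if j = k then Real.pi ^ 2 / 3
      else 2 * (-1 : ℝ) ^ ((k : ℤ) - (j : ℤ)) / (((k : ℤ) : ℝ) - ((j : ℤ) : ℝ)) ^ 2)).PosDef := by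
  set ι := ↥(Finset.Icc (-(N : ℤ)) (N : ℤ))
  set A : Matrix ι ι ℝ := Matrix.of (fun j k : ι =>
      if j = k then Real.pi ^ 2 / 3
      else 2 * (-1 : ℝ) ^ ((k : ℤ) - (j : ℤ)) / (((k : ℤ) : ℝ) - ((j : ℤ) : ℝ)) ^ 2) with hA
  have hπ : (0:ℝ) < π := Real.pi_pos
  -- entry formula
  have entry : ∀ j k : ι, A j k =
      (2*π)⁻¹ * ∫ t in (-π)..π, t^2 * Real.cos ((((k:ℤ) - (j:ℤ) : ℤ):ℝ) * t) := by
    intro j k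
    rw [integral_sq_cos_int]
    have haux : ∀ a d : ℝ, (2*π)⁻¹ * (4 * π * a / d) = 2 * a / d := by
      intro a d
      rw [show (2*π)⁻¹ * (4 * π * a / d) = (π⁻¹ * π) * (2 * a / d) by ring,
        inv_mul_cancel₀ Real.pi_ne_zero, one_mul]
    rcases eq_or_ne j k with h | h
    · subst h
      have hAd : A j j = π^2/3 := by simp [hA]
      rw [hAd, if_pos (sub_self ((j:ℤ))),
        show (2*π)⁻¹ * (2 * π^3 / 3) = (π⁻¹ * π) * (π^2/3) by ring,
        inv_mul_cancel₀ Real.pi_ne_zero, one_mul]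
    · have hne : (k:ℤ) - (j:ℤ) ≠ 0 := by
        intro hc
        exact h (Subtype.ext (by linarith [sub_eq_zero.mp hc])).symm
      have hcast : (((k:ℤ) - (j:ℤ) : ℤ):ℝ) ≠ 0 := Int.cast_ne_zero.mpr hne
      simp only [if_neg hne, hA, Matrix.of_apply, if_neg h]
      rw [show (((k:ℤ):ℝ) - ((j:ℤ):ℝ)) = (((k:ℤ) - (j:ℤ) : ℤ):ℝ) by push_cast; ring, haux]
  rw [Matrix.posDef_iff_dotProduct_mulVec]
  constructor
  · -- Hermitian
    ext i j
    simp only [Matrix.conjTranspose_apply, star_trivial]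
    rcases eq_or_ne j i with h | h
    · subst h; rfl
    · simp only [hA, Matrix.of_apply, if_neg h, if_neg (Ne.symm h)]
      rw [show (i:ℤ) - (j:ℤ) = -((j:ℤ) - (i:ℤ)) by ring, neg_one_zpow_neg,
        show (((i:ℤ):ℝ) - ((j:ℤ):ℝ))^2 = (((j:ℤ):ℝ) - ((i:ℤ):ℝ))^2 by ring]
  · -- positivity
    intro x hx
    set C : ℝ → ℝ := fun t => ∑ j : ι, x j * Real.cos (((j:ℤ):ℝ) * t) with hC
    set S : ℝ → ℝ := fun t => ∑ j : ι, x j * Real.sin (((j:ℤ):ℝ) * t) with hS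
    have hccos : ∀ c : ℝ, Continuous fun t : ℝ => Real.cos (c * t) := fun c =>
      Real.continuous_cos.comp (continuous_const.mul continuous_id)
    have hcsin : ∀ c : ℝ, Continuous fun t : ℝ => Real.sin (c * t) := fun c =>
      Real.continuous_sin.comp (continuous_const.mul continuous_id)
    have hCcont : Continuous C :=
      continuous_finset_sum _ fun j _ => continuous_const.mul (hccos _)
    have hScont : Continuous S :=
      continuous_finset_sum _ fun j _ => continuous_const.mul (hcsin _)
    -- pointwise expansion
    have expand : ∀ t : ℝ, ∑ j : ι, ∑ k : ι,
        x j * x k * (t^2 * Real.cos ((((k:ℤ) - (j:ℤ) : ℤ):ℝ) * t))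
        = t^2 * (C t^2 + S t^2) := by
      intro t
      have h1 : C t ^ 2 + S t ^ 2 = ∑ j : ι, ∑ k : ι,
          x j * x k * Real.cos ((((k:ℤ) - (j:ℤ) : ℤ):ℝ) * t) := by
        simp only [hC, hS, sq, Finset.sum_mul_sum, ← Finset.sum_add_distrib]
        refine Finset.sum_congr rfl fun j _ => Finset.sum_congr rfl fun k _ => ?_
        rw [show ((((k:ℤ) - (j:ℤ) : ℤ):ℝ) * t) = ((k:ℤ):ℝ) * t - ((j:ℤ):ℝ) * t by push_cast; ring,
          Real.cos_sub]
        ring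
      rw [h1, Finset.mul_sum]
      refine Finset.sum_congr rfl fun j _ => ?_
      rw [Finset.mul_sum]
      refine Finset.sum_congr rfl fun k _ => ?_
      ring
    have hint : ∀ j k : ι, IntervalIntegrable
        (fun t => x j * x k * (t^2 * Real.cos ((((k:ℤ) - (j:ℤ) : ℤ):ℝ) * t))) volume (-π) π := by
      intro j k
      exact (continuous_const.mul ((continuous_pow 2).mul (hccos _))).intervalIntegrable _ _
    -- quadratic form
    have hform : dotProduct (star x) (A.mulVec x) = (2*π)⁻¹ * ∫ t in (-π)..π, t^2 * (C t^2 + S t^2) := by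
      have swap : ∫ t in (-π)..π, t^2 * (C t^2 + S t^2)
          = ∑ j : ι, ∑ k : ι, x j * x k *
            ∫ t in (-π)..π, t^2 * Real.cos ((((k:ℤ) - (j:ℤ) : ℤ):ℝ) * t) := by
        have hfe : (fun t => t^2 * (C t^2 + S t^2)) = fun t => ∑ j : ι, ∑ k : ι,
            x j * x k * (t^2 * Real.cos ((((k:ℤ) - (j:ℤ) : ℤ):ℝ) * t)) :=
          funext fun t => (expand t).symm
        rw [hfe]
        have hprod : ∀ t : ℝ, (∑ j : ι, ∑ k : ι,
            x j * x k * (t^2 * Real.cos ((((k:ℤ) - (j:ℤ) : ℤ):ℝ) * t))) =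
            ∑ p : ι × ι, x p.1 * x p.2 * (t^2 * Real.cos ((((p.2:ℤ) - (p.1:ℤ) : ℤ):ℝ) * t)) :=
          fun t => by rw [Fintype.sum_prod_type]
        simp only [hprod]
        have hswap := intervalIntegral.integral_finset_sum (μ := volume) (a := -π) (b := π)
          (s := Finset.univ)
          (f := fun (p : ι × ι) (t : ℝ) =>
            x p.1 * x p.2 * (t^2 * Real.cos ((((p.2:ℤ) - (p.1:ℤ) : ℤ):ℝ) * t)))
          (fun p _ => hint p.1 p.2)
        rw [hswap, Fintype.sum_prod_type]
        exact Finset.sum_congr rfl fun j _ => Finset.sum_congr rfl fun k _ =>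
          intervalIntegral.integral_const_mul _ _
      rw [swap]
      have hlhs : dotProduct (star x) (A.mulVec x) = ∑ j : ι, ∑ k : ι, x j * (A j k * x k) := by
        simp only [dotProduct, Matrix.mulVec, Pi.star_apply, star_trivial,
          Finset.mul_sum]
        rfl
      rw [hlhs]
      simp only [Finset.mul_sum]
      refine Finset.sum_congr rfl fun j _ => Finset.sum_congr rfl fun k _ => ?_
      rw [entry j k]
      ring
    rw [hform]
    have hnonneg : 0 ≤ ∫ t in (-π)..π, t^2 * (C t^2 + S t^2) := by
      apply intervalIntegral.integral_nonneg (by linarith)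
      intro t _; positivity
    have hintegrable : IntervalIntegrable (fun t => t^2 * (C t^2 + S t^2)) volume (-π) π :=
      ((continuous_pow 2).mul ((hCcont.pow 2).add (hScont.pow 2))).intervalIntegrable _ _
    have hne : (∫ t in (-π)..π, t^2 * (C t^2 + S t^2)) ≠ 0 := by
      intro h0
      apply hx
      rw [intervalIntegral.integral_eq_zero_iff_of_le_of_nonneg_ae (by linarith)
        (Filter.Eventually.of_forall fun t => by positivity) hintegrable] at h0
      -- a.e. vanishing on Ioc
      have hzero : ∀ᵐ t ∂(volume.restrict (Set.Ioc (-π) π)), C t = 0 ∧ S t = 0 := by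
        have hne0 : ∀ᵐ t : ℝ ∂volume, t ≠ 0 := by
          have : volume ({0} : Set ℝ) = 0 := measure_singleton 0
          rw [MeasureTheory.ae_iff]
          simpa [Set.setOf_eq_eq_singleton'] using this
        filter_upwards [h0, MeasureTheory.ae_restrict_of_ae hne0] with t ht hnt
        simp only [Pi.zero_apply] at ht
        have ht2 : (0:ℝ) < t^2 := by positivity
        have hsum : C t^2 + S t^2 = 0 := by
          rcases mul_eq_zero.mp ht with h | h
          · exact absurd h (by positivity)
          · exact h
        constructor <;> nlinarith [sq_nonneg (C t), sq_nonneg (S t)]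
      funext m
      -- orthogonality
      have horth : ∫ t in (-π)..π,
          (C t * Real.cos (((m:ℤ):ℝ) * t) + S t * Real.sin (((m:ℤ):ℝ) * t)) = 2*π * x m := by
        have hpt : ∀ t : ℝ, C t * Real.cos (((m:ℤ):ℝ) * t) + S t * Real.sin (((m:ℤ):ℝ) * t)
            = ∑ j : ι, x j * Real.cos ((((j:ℤ) - (m:ℤ) : ℤ):ℝ) * t) := by
          intro t
          simp only [hC, hS, Finset.sum_mul, ← Finset.sum_add_distrib]
          refine Finset.sum_congr rfl fun j _ => ?_
          rw [show ((((j:ℤ) - (m:ℤ) : ℤ):ℝ) * t) = ((j:ℤ):ℝ) * t - ((m:ℤ):ℝ) * t by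
            push_cast; ring, Real.cos_sub]
          ring
        simp only [hpt]
        rw [intervalIntegral.integral_finset_sum (f := fun j t => x j * Real.cos ((((j:ℤ) - (m:ℤ) : ℤ):ℝ) * t)) (fun j _ =>
          (continuous_const.mul (hccos _)).intervalIntegrable _ _)]
        have : ∀ j : ι, ∫ t in (-π)..π, x j * Real.cos ((((j:ℤ) - (m:ℤ) : ℤ):ℝ) * t)
            = x j * (if ((j:ℤ) - (m:ℤ)) = 0 then 2*π else 0) := by
          intro j
          rw [intervalIntegral.integral_const_mul, integral_cos_int]
        simp only [this]
        have hcond : ∀ j : ι, ((j:ℤ) - (m:ℤ) = 0) = (j = m) := fun j => by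
          simp [sub_eq_zero, Subtype.coe_inj]
        simp only [hcond, mul_ite, mul_zero, Finset.sum_ite_eq', Finset.mem_univ, if_pos]
        ring
      have hzero' : ∫ t in (-π)..π,
          (C t * Real.cos (((m:ℤ):ℝ) * t) + S t * Real.sin (((m:ℤ):ℝ) * t)) = 0 := by
        rw [intervalIntegral.integral_of_le (by linarith)]
        apply MeasureTheory.integral_eq_zero_of_ae
        filter_upwards [hzero] with t ht
        simp [ht.1, ht.2]
      rw [hzero'] at horth
      have : x m = 0 := by
        have h2π : (2*π) ≠ 0 := by positivity
        field_simp at horth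
        exact (mul_eq_zero.mp horth.symm).resolve_left h2π
      simpa using this
    have hpos : 0 < ∫ t in (-π)..π, t^2 * (C t^2 + S t^2) := lt_of_le_of_ne hnonneg (Ne.symm hne)
    have : (0:ℝ) < (2*π)⁻¹ := by positivity
    exact mul_pos this hpos
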